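/- Let A = (a, ha+d, ha+2d, …, ha+kd) where a, h, d, k are positive integers, gcd(a, d) = 1 and 1 ≤ k ≤ a−1. Then the Sylvester number satisfies n(A) = h·(⌊(a−1)/k⌋ + 1)·(a − 1 − (k/2)·⌊(a−1)/k⌋) + (d−1)(a−1)/2. -/

import Mathlib

/-- `m` is representable by the sequence `A`. -/
def IsRepresentable {n : ℕ} (A : Fin n → ℕ) (m : ℕ) : Prop :=
  ∃ x : Fin n → ℕ, m = ∑ i, A i * x i

/-- For the almost arithmetic sequence `A = (a, ha+d, ha+2d, …, ha+kd)` with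
`a, h, d, k ≥ 1`, `gcd(a, d) = 1` and `1 ≤ k ≤ a-1`:
`n(A) = h·(⌊(a-1)/k⌋ + 1)·(a - 1 - (k/2)·⌊(a-1)/k⌋) + (d-1)(a-1)/2`. -/

lemma cl_le_iff {k s q : ℕ} (hk : 0 < k) : (s + k - 1) / k ≤ q ↔ s ≤ q * k := by
  rw [Nat.div_le_iff_le_mul_add_pred hk, mul_comm k q]
  omega

lemma le_cl_mul {k s : ℕ} (hk : 0 < k) : s ≤ ((s + k - 1) / k) * k :=
  (cl_le_iff hk).mp le_rfl

lemma cl_le_self {k s : ℕ} (hk : 0 < k) : (s + k - 1) / k ≤ s := by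
  rcases Nat.eq_zero_or_pos s with rfl | hs
  · simp [Nat.div_eq_of_lt, hk, Nat.sub_lt hk]
  · rw [cl_le_iff hk]; nlinarith

lemma sum_ind (k c : ℕ) (hc : c < k) (g : ℕ → ℕ) :
    (∑ i : Fin k, if i.val = c then g i.val else 0) = g c := by
  rw [Fin.sum_univ_eq_sum_range (fun i => if i = c then g i else 0) k]
  rw [Finset.sum_ite_eq' (Finset.range k) c g]
  simp [hc]

lemma exists_y (k : ℕ) (hk : 0 < k) : ∀ q s : ℕ, q ≤ s → s ≤ q * k →
    ∃ y : Fin k → ℕ, (∑ i, y i) = q ∧ (∑ i : Fin k, (i.val + 1) * y i) = s := by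
  intro q
  induction q with
  | zero =>
    intro s h1 h2
    have : s = 0 := by omega
    subst this
    exact ⟨0, by simp, by simp⟩
  | succ q ih =>
    intro s h1 h2
    set j := min k (s - q) with hj
    have hj1 : 1 ≤ j := le_min hk (by omega)
    have hjk : j ≤ k := min_le_left _ _
    have h1' : q ≤ s - j := by omega
    have h2' : s - j ≤ q * k := by
      rcases le_or_gt k (s - q) with hc | hc
      · have hjek : j = k := min_eq_left hc
        have : (q + 1) * k = q * k + k := by ring
        omega
      · have hje : j = s - q := min_eq_right (le_of_lt hc)
        have : q ≤ q * k := Nat.le_mul_of_pos_right q hk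
        omega
    obtain ⟨y, hy1, hy2⟩ := ih (s - j) h1' h2'
    refine ⟨fun i => y i + if i.val = j - 1 then 1 else 0, ?_, ?_⟩
    · rw [Finset.sum_add_distrib, hy1]
      have : (∑ i : Fin k, if i.val = j - 1 then 1 else 0) = 1 :=
        sum_ind k (j - 1) (by omega) (fun _ => 1)
      omega
    · have expand : ∀ i : Fin k, (i.val + 1) * (y i + if i.val = j - 1 then 1 else 0)
          = (i.val + 1) * y i + (if i.val = j - 1 then i.val + 1 else 0) := by
        intro i; split <;> ring
      simp only [expand]
      rw [Finset.sum_add_distrib, hy2]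
      have : (∑ i : Fin k, if i.val = j - 1 then i.val + 1 else 0) = j :=
        (sum_ind k (j - 1) (by omega) (fun i => i + 1)).trans (by omega)
      omega

lemma repr_iff (a h d k : ℕ) (hk : 0 < k) (m : ℕ) :
    IsRepresentable (Fin.cons a (fun i : Fin k => h * a + d * (i.val + 1))) m ↔
    ∃ t q s : ℕ, q ≤ s ∧ s ≤ q * k ∧ m = t * a + q * (h * a) + s * d := by
  constructor
  · rintro ⟨x, rfl⟩
    refine ⟨x 0, ∑ i : Fin k, x i.succ, ∑ i : Fin k, (i.val + 1) * x i.succ, ?_, ?_, ?_⟩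
    · exact Finset.sum_le_sum fun i _ => Nat.le_mul_of_pos_left _ (Nat.succ_pos _)
    · rw [Finset.sum_mul]
      exact Finset.sum_le_sum fun i _ => by
        have : i.val + 1 ≤ k := i.isLt
        exact le_trans (Nat.mul_le_mul_right _ this) (le_of_eq (mul_comm _ _))
    · have key : ∀ i : Fin k, (h * a + d * (i.val + 1)) * x i.succ
          = x i.succ * (h * a) + ((i.val + 1) * x i.succ) * d := fun i => by ring
      rw [Fin.sum_univ_succ]
      simp only [Fin.cons_zero, Fin.cons_succ, key]
      rw [Finset.sum_add_distrib, ← Finset.sum_mul, ← Finset.sum_mul, mul_comm a (x 0), add_assoc]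
  · rintro ⟨t, q, s, hqs, hsk, rfl⟩
    obtain ⟨y, hy1, hy2⟩ := exists_y k hk q s hqs hsk
    refine ⟨Fin.cons t y, ?_⟩
    have key : ∀ i : Fin k, (h * a + d * (i.val + 1)) * y i
        = y i * (h * a) + ((i.val + 1) * y i) * d := fun i => by ring
    rw [Fin.sum_univ_succ]
    simp only [Fin.cons_zero, Fin.cons_succ, key]
    rw [Finset.sum_add_distrib, ← Finset.sum_mul, ← Finset.sum_mul, hy1, hy2,
      mul_comm a t, add_assoc]

section Main

variable (a h d k : ℕ)

/-- minimal representable element in the class of `s*d` mod `a` -/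
def mf (s : ℕ) : ℕ := ((s + k - 1) / k) * (h * a) + s * d

lemma mf_mod (ha : 0 < a) (s : ℕ) : mf a h d k s % a = (s * d) % a := by
  unfold mf
  rw [← mul_assoc, add_comm, Nat.add_mul_mod_self_right]

lemma repr_of (ha : 0 < a) (hk : 0 < k) (m s : ℕ) (hmod : m % a = (s * d) % a)
    (hle : mf a h d k s ≤ m) :
    IsRepresentable (Fin.cons a (fun i : Fin k => h * a + d * (i.val + 1))) m := by
  rw [repr_iff a h d k hk]
  have hmm : mf a h d k s ≡ m [MOD a] := ((mf_mod a h d k ha s).trans hmod.symm : _)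
  obtain ⟨t, ht⟩ := (Nat.modEq_iff_dvd' hle).mp hmm
  refine ⟨t, (s + k - 1) / k, s, cl_le_self hk, le_cl_mul hk, ?_⟩
  have hm : m = mf a h d k s + a * t := by omega
  rw [hm]; unfold mf; ring

lemma repr_to (ha : 0 < a) (hk : 0 < k) (m : ℕ)
    (hr : IsRepresentable (Fin.cons a (fun i : Fin k => h * a + d * (i.val + 1))) m) :
    ∃ s, s < a ∧ m % a = (s * d) % a ∧ mf a h d k s ≤ m := by
  rw [repr_iff a h d k hk] at hr
  obtain ⟨t, q, s', h1, h2, rfl⟩ := hr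
  refine ⟨s' % a, Nat.mod_lt _ ha, ?_, ?_⟩
  · have e : t * a + q * (h * a) + s' * d = s' * d + (t + q * h) * a := by ring
    rw [e, Nat.add_mul_mod_self_right]
    exact ((Nat.mod_modEq s' a).mul_right d).symm
  · have hcl1 : (s' % a + k - 1) / k ≤ (s' + k - 1) / k :=
      Nat.div_le_div_right (by have := Nat.mod_le s' a; omega)
    have hcl2 : (s' + k - 1) / k ≤ q := (cl_le_iff hk).mpr h2
    have A : ((s' % a + k - 1) / k) * (h * a) ≤ q * (h * a) :=
      Nat.mul_le_mul_right _ (hcl1.trans hcl2)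
    have B : (s' % a) * d ≤ s' * d := Nat.mul_le_mul_right d (Nat.mod_le s' a)
    unfold mf
    omega

def Gs (s : ℕ) : Finset ℕ :=
  (Finset.range (mf a h d k s / a)).image (fun j => (s * d) % a + a * j)

lemma mem_Gs_mod (ha : 0 < a) {m s : ℕ} (hm : m ∈ Gs a h d k s) :
    m % a = (s * d) % a ∧ m < mf a h d k s := by
  obtain ⟨j, hj, rfl⟩ := Finset.mem_image.mp hm
  rw [Finset.mem_range] at hj
  constructor
  · rw [Nat.add_mul_mod_self_left]
    exact Nat.mod_mod_of_dvd _ dvd_rfl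
  · have e := Nat.div_add_mod (mf a h d k s) a
    have e2 := mf_mod a h d k ha s
    have : a * j + a ≤ a * (mf a h d k s / a) := by
      have := Nat.mul_le_mul_left a (show j + 1 ≤ mf a h d k s / a from hj)
      rwa [Nat.mul_succ] at this
    have hlt : (s * d) % a < a := Nat.mod_lt _ ha
    omega

lemma mem_Gs_of (ha : 0 < a) {m s : ℕ} (hmod : m % a = (s * d) % a)
    (hlt : m < mf a h d k s) : m ∈ Gs a h d k s := by
  apply Finset.mem_image.mpr
  refine ⟨m / a, Finset.mem_range.mpr ?_, ?_⟩
  · by_contra hc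
    push_neg at hc
    have e1 := Nat.div_add_mod m a
    have e2 := Nat.div_add_mod (mf a h d k s) a
    have e3 := mf_mod a h d k ha s
    have : a * (mf a h d k s / a) ≤ a * (m / a) := Nat.mul_le_mul_left a hc
    omega
  · have e1 := Nat.div_add_mod m a
    omega

lemma gap_set_eq (ha1 : 1 < a) (hh : 0 < h) (hd : 0 < d) (hk : 0 < k)
    (had : Nat.gcd a d = 1) :
    {m : ℕ | ¬ IsRepresentable
        (Fin.cons a (fun i : Fin k => h * a + d * (i.val + 1))) m} =
      ↑((Finset.Ico 1 a).biUnion (Gs a h d k)) := by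
  have ha : 0 < a := by omega
  obtain ⟨d', -, hd'⟩ := Nat.exists_mul_mod_eq_one_of_coprime
    (Nat.Coprime.symm had) ha1
  have hdd' : d * d' ≡ 1 [MOD a] := hd'.trans (Nat.mod_eq_of_lt ha1).symm
  have hd'd : d' * d ≡ 1 [MOD a] := by rwa [mul_comm] at hdd'
  have hcancel : ∀ s s' : ℕ, s < a → s' < a → (s * d) % a = (s' * d) % a → s = s' := by
    intro s s' hs hs' he
    have : s ≡ s' [MOD a] :=
      Nat.ModEq.cancel_right_of_coprime had he
    rwa [Nat.ModEq, Nat.mod_eq_of_lt hs, Nat.mod_eq_of_lt hs'] at this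
  ext m
  simp only [Set.mem_setOf_eq, Finset.coe_biUnion, Set.mem_iUnion, Finset.mem_coe,
    Finset.mem_Ico]
  constructor
  · intro hnr
    set s := m * d' % a with hsdef
    have hmod : m % a = s * d % a := by
      have : s * d ≡ m [MOD a] := by
        calc s * d ≡ (m * d') * d [MOD a] := (Nat.mod_modEq _ a).mul_right d
          _ = m * (d' * d) := by ring
          _ ≡ m * 1 [MOD a] := Nat.ModEq.mul_left m hd'd
          _ = m := by ring
      exact this.symm
    have hs0 : s ≠ 0 := by
      intro h0
      rw [h0] at hmod
      exact hnr (repr_of a h d k ha hk m 0 (by simpa using hmod)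
        (by unfold mf; simp [Nat.div_eq_of_lt (show k - 1 < k by omega)]))
    have hsa : s < a := Nat.mod_lt _ ha
    have hlt : m < mf a h d k s := by
      by_contra hc
      push_neg at hc
      exact hnr (repr_of a h d k ha hk m s hmod hc)
    exact ⟨s, ⟨by omega, hsa⟩, mem_Gs_of a h d k ha hmod hlt⟩
  · rintro ⟨s, ⟨hs1, hsa⟩, hm⟩
    obtain ⟨hmod, hlt⟩ := mem_Gs_mod a h d k ha hm
    intro hrepr
    obtain ⟨s', hs'a, hmod', hle'⟩ := repr_to a h d k ha hk m hrepr
    have : s' = s := hcancel s' s hs'a hsa (hmod'.symm.trans hmod)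
    rw [this] at hle'
    omega

lemma card_Gs (ha : 0 < a) (s : ℕ) : (Gs a h d k s).card = mf a h d k s / a := by
  unfold Gs
  rw [Finset.card_image_of_injective _
    (fun x y hxy => Nat.eq_of_mul_eq_mul_left ha (Nat.add_left_cancel hxy)),
    Finset.card_range]

lemma mf_div (ha : 0 < a) (s : ℕ) :
    mf a h d k s / a = ((s + k - 1) / k) * h + s * d / a := by
  have e : mf a h d k s = a * (((s + k - 1) / k) * h) + s * d := by unfold mf; ring
  rw [e, Nat.mul_add_div ha]

end Main

lemma sumC (k : ℕ) (hk : 0 < k) (n : ℕ) :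
    2 * ((∑ s ∈ Finset.Ico 1 (n + 1), (s + k - 1) / k : ℕ) : ℤ)
      + (k : ℤ) * ((n / k : ℕ) : ℤ) * (((n / k : ℕ) : ℤ) + 1)
      = 2 * (((n / k : ℕ) : ℤ) + 1) * n := by
  induction n with
  | zero => simp [Nat.div_eq_of_lt hk]
  | succ n ih =>
    rw [Finset.sum_Ico_succ_top (by omega : 1 ≤ n + 1)]
    set S : ℕ := ∑ s ∈ Finset.Ico 1 (n + 1), (s + k - 1) / k with hS
    set q : ℕ := n / k with hq
    have hnew : (n + 1 + k - 1) / k = n / k + 1 := by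
      have e : n + 1 + k - 1 = n + k := by omega
      rw [e, Nat.add_div_right _ hk]
    rw [hnew]
    by_cases hdvd : k ∣ n + 1
    · have e1 : (n + 1) / k = n / k + 1 := by rw [Nat.succ_div, if_pos hdvd]
      have e2 : k * ((n + 1) / k) = n + 1 := Nat.mul_div_cancel' hdvd
      rw [e1] at e2
      have hn : (n : ℤ) + 1 = (k : ℤ) * ((q : ℤ) + 1) := by
        exact_mod_cast e2.symm
      rw [e1, ← hq]
      push_cast
      linear_combination ih - 2 * hn
    · have e1 : (n + 1) / k = n / k := by rw [Nat.succ_div, if_neg hdvd, add_zero]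
      rw [e1, ← hq]
      push_cast
      linear_combination ih

lemma sumF (a d d' : ℕ) (ha : 0 < a) (hdd' : d * d' ≡ 1 [MOD a])
    (hd'd : d' * d ≡ 1 [MOD a]) :
    d * (∑ s ∈ Finset.range a, s)
      = a * (∑ s ∈ Finset.range a, s * d / a) + ∑ s ∈ Finset.range a, s := by
  have perm : ∑ s ∈ Finset.range a, (s * d % a) = ∑ s ∈ Finset.range a, s := by
    refine Finset.sum_nbij' (i := fun s => s * d % a) (j := fun t => t * d' % a)
      (fun s _ => Finset.mem_range.mpr (Nat.mod_lt _ ha))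
      (fun t _ => Finset.mem_range.mpr (Nat.mod_lt _ ha)) ?_ ?_ (fun s _ => rfl)
    · intro s hs
      rw [Finset.mem_range] at hs
      show (s * d % a) * d' % a = s
      have : (s * d % a) * d' ≡ s [MOD a] := by
        calc (s * d % a) * d' ≡ (s * d) * d' [MOD a] := (Nat.mod_modEq _ a).mul_right d'
          _ = s * (d * d') := by ring
          _ ≡ s * 1 [MOD a] := Nat.ModEq.mul_left s hdd'
          _ = s := by ring
      rw [Nat.ModEq] at this
      rw [this, Nat.mod_eq_of_lt hs]
    · intro t ht
      rw [Finset.mem_range] at ht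
      show (t * d' % a) * d % a = t
      have : (t * d' % a) * d ≡ t [MOD a] := by
        calc (t * d' % a) * d ≡ (t * d') * d [MOD a] := (Nat.mod_modEq _ a).mul_right d
          _ = t * (d' * d) := by ring
          _ ≡ t * 1 [MOD a] := Nat.ModEq.mul_left t hd'd
          _ = t := by ring
      rw [Nat.ModEq] at this
      rw [this, Nat.mod_eq_of_lt ht]
  have expand : ∑ s ∈ Finset.range a, s * d
      = ∑ s ∈ Finset.range a, (a * (s * d / a) + s * d % a) :=
    Finset.sum_congr rfl (fun s _ => (Nat.div_add_mod _ _).symm)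
  rw [Finset.sum_add_distrib, ← Finset.mul_sum, perm] at expand
  rw [← expand, ← Finset.sum_mul, mul_comm]

theorem stmt_18 (a h d k : ℕ) (ha : 0 < a) (hh : 0 < h) (hd : 0 < d)
    (had : Nat.gcd a d = 1) (hk1 : 1 ≤ k) (hka : k ≤ a - 1) :
    (({m : ℕ | ¬ IsRepresentable
        (Fin.cons a (fun i : Fin k => h * a + d * (i.val + 1))) m}.ncard : ℚ)) =
      (h : ℚ) * ((((a - 1) / k : ℕ) : ℚ) + 1)
          * ((a : ℚ) - 1 - (k : ℚ) / 2 * (((a - 1) / k : ℕ) : ℚ))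
        + ((d : ℚ) - 1) * ((a : ℚ) - 1) / 2 := by
  have ha1 : 1 < a := by omega
  have hk : 0 < k := hk1
  obtain ⟨d', -, hd'⟩ := Nat.exists_mul_mod_eq_one_of_coprime (Nat.Coprime.symm had) ha1
  have hdd' : d * d' ≡ 1 [MOD a] := hd'.trans (Nat.mod_eq_of_lt ha1).symm
  have hd'd : d' * d ≡ 1 [MOD a] := by rwa [mul_comm] at hdd'
  rw [gap_set_eq a h d k ha1 hh hd hk had, Set.ncard_coe_finset]
  have hdisj : ∀ s ∈ Finset.Ico 1 a, ∀ s' ∈ Finset.Ico 1 a, s ≠ s' →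
      Disjoint (Gs a h d k s) (Gs a h d k s') := by
    intro s hs s' hs' hne
    rw [Finset.mem_Ico] at hs hs'
    rw [Finset.disjoint_left]
    intro m hm hm'
    apply hne
    have h1 := (mem_Gs_mod a h d k ha hm).1
    have h2 := (mem_Gs_mod a h d k ha hm').1
    have hmod : s ≡ s' [MOD a] :=
      Nat.ModEq.cancel_right_of_coprime had (h1.symm.trans h2 : _)
    rwa [Nat.ModEq, Nat.mod_eq_of_lt hs.2, Nat.mod_eq_of_lt hs'.2] at hmod
  rw [Finset.card_biUnion hdisj]
  have hcard : ∀ s ∈ Finset.Ico 1 a,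
      (Gs a h d k s).card = ((s + k - 1) / k) * h + s * d / a :=
    fun s _ => (card_Gs a h d k ha s).trans (mf_div a h d k ha s)
  rw [Finset.sum_congr rfl hcard, Finset.sum_add_distrib, ← Finset.sum_mul]
  set N : ℕ := a - 1 with hN
  set Q : ℕ := N / k with hQ
  set C : ℕ := ∑ s ∈ Finset.Ico 1 a, (s + k - 1) / k with hC
  set F : ℕ := ∑ s ∈ Finset.Ico 1 a, s * d / a with hF0
  set T : ℕ := ∑ s ∈ Finset.Ico 1 a, s with hT
  have haN : a = N + 1 := by omega
  have A1 : 2 * (C : ℚ) + (k : ℚ) * Q * ((Q : ℚ) + 1) = 2 * ((Q : ℚ) + 1) * N := by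
    have hs := sumC k hk N
    rw [show N + 1 = a from by omega] at hs
    exact_mod_cast hs
  have A2 : (d : ℚ) * T = (a : ℚ) * F + T := by
    have h1 : ∑ s ∈ Finset.range a, s = T := by
      rw [hT, Finset.range_eq_Ico, Finset.sum_eq_sum_Ico_succ_bot ha]
      simp
    have h2 : ∑ s ∈ Finset.range a, s * d / a = F := by
      rw [hF0, Finset.range_eq_Ico, Finset.sum_eq_sum_Ico_succ_bot ha]
      simp
    have hs := sumF a d d' ha hdd' hd'd
    rw [h1, h2] at hs
    exact_mod_cast hs
  have A3 : (T : ℚ) * 2 = (a : ℚ) * N := by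
    have hs := Finset.sum_range_id_mul_two a
    have h1 : ∑ s ∈ Finset.range a, s = T := by
      rw [hT, Finset.range_eq_Ico, Finset.sum_eq_sum_Ico_succ_bot ha]
      simp
    rw [h1, ← hN] at hs
    exact_mod_cast hs
  have haQ : (a : ℚ) = (N : ℚ) + 1 := by rw [haN]; push_cast; ring
  rw [haQ] at A2 A3 ⊢
  push_cast
  have hF : (F : ℚ) = ((d : ℚ) - 1) * N / 2 := by
    have hNe : ((N : ℚ) + 1) ≠ 0 := by positivity
    apply mul_left_cancel₀ hNe
    linear_combination -A2 + ((d : ℚ) - 1) / 2 * A3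
  linear_combination hF + (h : ℚ) / 2 * A1
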